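/- Let G be a connected graph on n vertices with minimum degree δ, and let G^c be its complement. If the signless Laplacian spectral radius of the complement satisfies q1(G^c) < 2δ, then G has a fractional perfect matching. -/

import Mathlib

open SimpleGraph Finset

/-- The signless Laplacian matrix `Q(G) = D(G) + A(G)` of a graph. -/
noncomputable def signlessLap {V : Type*} [Fintype V] [DecidableEq V]
    (G : SimpleGraph V) [DecidableRel G.Adj] : Matrix V V ℝ :=
  Matrix.diagonal (fun v => (G.degree v : ℝ)) + G.adjMatrix ℝ

/-- The signless Laplacian spectral radius: the largest eigenvalue of `Q(G)`. -/
noncomputable def q1 {V : Type*} [Fintype V] [DecidableEq V]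
    (G : SimpleGraph V) [DecidableRel G.Adj] : ℝ :=
  sSup (spectrum ℝ (signlessLap G))

/-- `f` is a fractional matching of `G`: it assigns each edge a weight in `[0,1]`
(and `0` to non-edges), with total weight at most `1` at each vertex. -/
def IsFracMatching {V : Type*} [Fintype V] [DecidableEq V]
    (G : SimpleGraph V) [DecidableRel G.Adj] (f : Sym2 V → ℝ) : Prop :=
  (∀ e ∈ G.edgeFinset, 0 ≤ f e ∧ f e ≤ 1) ∧
  (∀ e, e ∉ G.edgeFinset → f e = 0) ∧
  (∀ v : V, ∑ e ∈ G.incidenceFinset v, f e ≤ 1)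

/-- The fractional matching number of `G`. -/
noncomputable def fracMatchNum {V : Type*} [Fintype V] [DecidableEq V]
    (G : SimpleGraph V) [DecidableRel G.Adj] : ℝ :=
  sSup {x : ℝ | ∃ f, IsFracMatching G f ∧ x = ∑ e ∈ G.edgeFinset, f e}

/-- `G` has a fractional perfect matching: a fractional matching of total weight `n/2`. -/
def HasFracPerfectMatching {V : Type*} [Fintype V] [DecidableEq V]
    (G : SimpleGraph V) [DecidableRel G.Adj] : Prop :=
  ∃ f, IsFracMatching G f ∧ ∑ e ∈ G.edgeFinset, f e = (Fintype.card V : ℝ) / 2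

open Matrix

lemma rayleigh_le_sSup_spectrum {n : Type*} [Fintype n] [DecidableEq n]
    {M : Matrix n n ℝ} (hM : M.IsHermitian) (x : n → ℝ) :
    x ⬝ᵥ (M *ᵥ x) ≤ sSup (spectrum ℝ M) * (x ⬝ᵥ x) := by
  set c := sSup (spectrum ℝ M) with hc
  have hbdd : BddAbove (spectrum ℝ M) := (Matrix.finite_spectrum M).bddAbove
  have hle : ∀ i, hM.eigenvalues i ≤ c := fun i =>
    le_csSup hbdd (hM.eigenvalues_mem_spectrum_real i)
  set U : Matrix n n ℝ := (Matrix.IsHermitian.eigenvectorUnitary hM : Matrix n n ℝ) with hU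
  have hUU : U * star U = 1 :=
    Matrix.mem_unitaryGroup_iff.mp (Matrix.IsHermitian.eigenvectorUnitary hM).2
  have hspec : M = U * Matrix.diagonal hM.eigenvalues * star U := by
    have := Matrix.IsHermitian.spectral_theorem hM
    simpa [RCLike.ofReal_real_eq_id, Function.id_comp] using this
  have hdi : Matrix.diagonal (fun i => c - hM.eigenvalues i)
      = c • (1 : Matrix n n ℝ) - Matrix.diagonal hM.eigenvalues := by
    ext i j
    by_cases h : i = j <;>
      simp [h, Matrix.diagonal_apply, Matrix.one_apply, Matrix.smul_apply]
  have key : c • (1 : Matrix n n ℝ) - M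
      = U * Matrix.diagonal (fun i => c - hM.eigenvalues i) * star U := by
    rw [hdi, Matrix.mul_sub, Matrix.sub_mul, Matrix.mul_smul, mul_one, Matrix.smul_mul,
      hUU, ← hspec]
  have hpsd : (c • (1 : Matrix n n ℝ) - M).PosSemidef := by
    have hdiagPSD : (Matrix.diagonal (fun i => c - hM.eigenvalues i)).PosSemidef :=
      Matrix.PosSemidef.diagonal (fun i => sub_nonneg.2 (hle i))
    have h2 := hdiagPSD.mul_mul_conjTranspose_same U
    rw [← Matrix.star_eq_conjTranspose] at h2
    rw [key]
    exact h2
  have h0 := hpsd.dotProduct_mulVec_nonneg x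
  have hx : star x = x := by
    funext i; exact star_trivial _
  rw [hx, Matrix.sub_mulVec, Matrix.smul_mulVec, Matrix.one_mulVec,
    dotProduct_sub, dotProduct_smul, smul_eq_mul] at h0
  linarith

lemma isHermitian_signlessLap {V : Type*} [Fintype V] [DecidableEq V]
    (H : SimpleGraph V) [DecidableRel H.Adj] : (signlessLap H).IsHermitian := by
  refine Matrix.IsHermitian.add (Matrix.isHermitian_diagonal _) ?_
  show (H.adjMatrix ℝ)ᴴ = H.adjMatrix ℝ
  ext i j
  simp only [Matrix.conjTranspose_apply, SimpleGraph.adjMatrix_apply, star_trivial]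
  exact if_congr ⟨fun h => h.symm, fun h => h.symm⟩ rfl rfl

lemma clique_le_q1 {V : Type*} [Fintype V] [DecidableEq V]
    (H : SimpleGraph V) [DecidableRel H.Adj] (J : Finset V) (hne : J.Nonempty)
    (hclique : ∀ u ∈ J, ∀ v ∈ J, u ≠ v → H.Adj u v) :
    2 * ((J.card : ℝ) - 1) ≤ q1 H := by
  classical
  set k : ℕ := J.card with hk
  have hk1 : 1 ≤ k := Nat.one_le_iff_ne_zero.2 (by simpa [hk] using card_ne_zero_of_mem hne.choose_spec)
  set x : V → ℝ := fun v => if v ∈ J then 1 else 0 with hxdef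
  have hxnn : ∀ v, 0 ≤ x v := by intro v; by_cases h : v ∈ J <;> simp [hxdef, h]
  have hxx : x ⬝ᵥ x = (k : ℝ) := by
    simp only [dotProduct, hxdef, ite_mul, one_mul, zero_mul, if_pos]
    rw [Finset.sum_ite_mem, univ_inter]
    simp [hk]
  -- degree bound
  have hdegJ : ∀ v ∈ J, ((k:ℝ) - 1) ≤ (H.degree v : ℝ) := by
    intro v hv
    have hsub : J.erase v ⊆ H.neighborFinset v := by
      intro w hw
      rw [SimpleGraph.mem_neighborFinset]
      exact (hclique v hv w (mem_of_mem_erase hw) (Ne.symm (mem_erase.1 hw).1)).symm.symm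
        |>.symm.symm -- Adj v w
    have hcard : k - 1 ≤ H.degree v := by
      have := card_le_card hsub
      rwa [card_erase_of_mem hv, SimpleGraph.card_neighborFinset_eq_degree] at this
    have : ((k - 1 : ℕ) : ℝ) ≤ (H.degree v : ℝ) := by exact_mod_cast hcard
    rwa [Nat.cast_sub hk1, Nat.cast_one] at this
  -- diagonal part
  have hT1 : (k:ℝ) * ((k:ℝ) - 1)
      ≤ x ⬝ᵥ (Matrix.diagonal (fun v => (H.degree v : ℝ)) *ᵥ x) := by
    have hT1eq : x ⬝ᵥ (Matrix.diagonal (fun v => (H.degree v : ℝ)) *ᵥ x)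
        = ∑ v ∈ J, (H.degree v : ℝ) := by
      simp only [dotProduct, Matrix.mulVec_diagonal, hxdef, ite_mul, one_mul, zero_mul,
        mul_ite, mul_one, mul_zero]
      rw [Finset.sum_ite_mem, univ_inter]
      exact Finset.sum_congr rfl fun v hv => if_pos hv
    rw [hT1eq]
    calc (k:ℝ) * ((k:ℝ) - 1) = ∑ _v ∈ J, ((k:ℝ) - 1) := by
          rw [Finset.sum_const, hk, nsmul_eq_mul]
      _ ≤ ∑ v ∈ J, (H.degree v : ℝ) := Finset.sum_le_sum hdegJ
  -- adjacency part
  have hT2 : (k:ℝ) * ((k:ℝ) - 1) ≤ x ⬝ᵥ ((H.adjMatrix ℝ) *ᵥ x) := by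
    rw [SimpleGraph.dotProduct_mulVec_adjMatrix]
    have hpt : ∀ i : V, ∑ _j ∈ J.erase i, (if i ∈ J then (1:ℝ) else 0)
        ≤ ∑ j : V, if H.Adj i j then x i * x j else 0 := by
      intro i
      by_cases hi : i ∈ J
      · simp only [if_pos hi]
        have : ∑ j ∈ J.erase i, (1:ℝ) ≤ ∑ j ∈ J.erase i, (if H.Adj i j then x i * x j else 0) := by
          refine Finset.sum_le_sum ?_
          intro j hj
          have hadj : H.Adj i j := hclique i hi j (mem_of_mem_erase hj) (Ne.symm (mem_erase.1 hj).1)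
          rw [if_pos hadj, hxdef]
          simp [hi, mem_of_mem_erase hj]
        refine this.trans (Finset.sum_le_sum_of_subset_of_nonneg (subset_univ _) ?_)
        intro j _ _
        by_cases h : H.Adj i j
        · rw [if_pos h]; exact mul_nonneg (hxnn i) (hxnn j)
        · rw [if_neg h]
      · simp only [if_neg hi, Finset.sum_const, smul_zero]
        refine Finset.sum_nonneg ?_
        intro j _
        by_cases h : H.Adj i j
        · rw [if_pos h]; exact mul_nonneg (hxnn i) (hxnn j)
        · rw [if_neg h]
    calc (k:ℝ) * ((k:ℝ) - 1) = ∑ i ∈ J, ((k:ℝ) - 1) := by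
          rw [Finset.sum_const, hk, nsmul_eq_mul]
      _ = ∑ i ∈ J, ∑ _j ∈ J.erase i, (1:ℝ) := by
          refine Finset.sum_congr rfl ?_
          intro i hi
          rw [Finset.sum_const, card_erase_of_mem hi, nsmul_eq_mul, mul_one]
          rw [Nat.cast_sub hk1, Nat.cast_one, hk]
      _ = ∑ i ∈ J, ∑ _j ∈ J.erase i, (if i ∈ J then (1:ℝ) else 0) := by
          refine Finset.sum_congr rfl (fun i hi => ?_)
          simp [hi]
      _ ≤ ∑ i ∈ J, ∑ j : V, (if H.Adj i j then x i * x j else 0) :=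
          Finset.sum_le_sum (fun i _ => hpt i)
      _ ≤ ∑ i : V, ∑ j : V, (if H.Adj i j then x i * x j else 0) := by
          refine Finset.sum_le_sum_of_subset_of_nonneg (subset_univ _) ?_
          intro i _ _
          refine Finset.sum_nonneg (fun j _ => ?_)
          by_cases h : H.Adj i j
          · rw [if_pos h]; exact mul_nonneg (hxnn i) (hxnn j)
          · rw [if_neg h]
  have hray := rayleigh_le_sSup_spectrum (isHermitian_signlessLap H) x
  have hsplit : x ⬝ᵥ (signlessLap H *ᵥ x)
      = x ⬝ᵥ (Matrix.diagonal (fun v => (H.degree v : ℝ)) *ᵥ x)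
        + x ⬝ᵥ ((H.adjMatrix ℝ) *ᵥ x) := by
    rw [signlessLap, Matrix.add_mulVec, dotProduct_add]
  have hkpos : (0:ℝ) < (k:ℝ) := by exact_mod_cast hk1
  have h2 : 2 * ((k:ℝ) - 1) * (k:ℝ) ≤ q1 H * (k:ℝ) := by
    have : 2 * ((k:ℝ) - 1) * (k:ℝ) ≤ x ⬝ᵥ (signlessLap H *ᵥ x) := by
      rw [hsplit]; ring_nf; nlinarith [hT1, hT2]
    calc 2 * ((k:ℝ) - 1) * (k:ℝ) ≤ x ⬝ᵥ (signlessLap H *ᵥ x) := this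
      _ ≤ sSup (spectrum ℝ (signlessLap H)) * (x ⬝ᵥ x) := hray
      _ = q1 H * (k:ℝ) := by rw [hxx]; rfl
  exact le_of_mul_le_mul_right h2 hkpos


/-- A bijection `m` with `v ~ m v` yields a fractional perfect matching. -/
lemma hasFracPerfectMatching_of_bij {V : Type*} [Fintype V] [DecidableEq V]
    (G : SimpleGraph V) [DecidableRel G.Adj] (m : V → V)
    (hminj : Function.Injective m) (hmadj : ∀ v, G.Adj v (m v)) :
    HasFracPerfectMatching G := by
  classical
  set g : V → Sym2 V := fun v => s(v, m v) with hg
  have hgE : ∀ w, g w ∈ G.edgeFinset := by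
    intro w
    rw [SimpleGraph.mem_edgeFinset]
    exact (hmadj w)
  set f : Sym2 V → ℝ := fun e => ((univ.filter fun w => g w = e).card : ℝ) / 2 with hf
  have hfnn : ∀ e, 0 ≤ f e := fun e => by positivity
  -- each fiber has at most 2 elements
  have hcard2 : ∀ e, (univ.filter fun w => g w = e).card ≤ 2 := by
    intro e
    induction e using Sym2.ind with
    | _ a b =>
      have hsub : (univ.filter fun w => g w = s(a, b)) ⊆ {a, b} := by
        intro w hw
        have := (mem_filter.1 hw).2
        rw [hg] at this
        rw [Sym2.eq_iff] at this
        rcases this with ⟨h1, _⟩ | ⟨h1, _⟩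
        · simp [h1]
        · simp [h1]
      exact (card_le_card hsub).trans (card_insert_le _ _ |>.trans (by simp))
  -- vertex sums
  have hvert : ∀ v : V, ∑ e ∈ G.incidenceFinset v, f e = 1 := by
    intro v
    obtain ⟨u, hu⟩ := (Finite.injective_iff_surjective.mp hminj) v
    have hvu : v ≠ u := by
      intro h; exact (G.irrefl (h ▸ (hu ▸ hmadj u)))
    have hfib : (univ.filter fun w => g w ∈ G.incidenceFinset v) = {v, u} := by
      ext w
      simp only [mem_filter, mem_univ, true_and, mem_insert, mem_singleton]
      rw [SimpleGraph.mem_incidenceFinset]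
      constructor
      · rintro ⟨-, hmem⟩
        rw [hg, Sym2.mem_iff] at hmem
        rcases hmem with h | h
        · exact Or.inl h.symm
        · exact Or.inr (hminj (by rw [hu, ← h]))
      · rintro (rfl | rfl)
        · exact ⟨G.mem_edgeSet.mpr (hmadj _), by simp [hg]⟩
        · exact ⟨G.mem_edgeSet.mpr (hmadj _), by simp [hg, Sym2.mem_iff, hu]⟩
    have hsum : ∑ e ∈ G.incidenceFinset v,
        ((univ.filter fun w => g w = e).card) = 2 := by
      have hcount := Finset.card_eq_sum_card_fiberwise
        (f := g) (s := univ.filter fun w => g w ∈ G.incidenceFinset v)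
        (t := G.incidenceFinset v) (fun w hw => (mem_filter.1 hw).2)
      have heach : ∀ e ∈ G.incidenceFinset v,
          ((univ.filter fun w => g w ∈ G.incidenceFinset v).filter fun w => g w = e)
            = univ.filter fun w => g w = e := by
        intro e he
        rw [Finset.filter_filter]
        refine Finset.filter_congr ?_
        intro w _
        constructor
        · rintro ⟨-, h⟩; exact h
        · rintro rfl; exact ⟨he, rfl⟩
      have hcount2 : (univ.filter fun w => g w ∈ G.incidenceFinset v).card
          = ∑ e ∈ G.incidenceFinset v, (univ.filter fun w => g w = e).card := by
        rw [hcount]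
        exact Finset.sum_congr rfl (fun e he => by rw [heach e he])
      rw [← hcount2, hfib, card_insert_of_notMem (by simpa using hvu), card_singleton]
    rw [hf]
    simp only []
    rw [← Finset.sum_div]
    rw [show ∑ e ∈ G.incidenceFinset v, ((univ.filter fun w => g w = e).card : ℝ)
        = ((∑ e ∈ G.incidenceFinset v, (univ.filter fun w => g w = e).card : ℕ) : ℝ) by
      push_cast; ring]
    rw [hsum]
    norm_num
  refine ⟨f, ⟨?_, ?_, ?_⟩, ?_⟩
  · intro e _
    refine ⟨hfnn e, ?_⟩
    rw [hf]
    have := hcard2 e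
    have : ((univ.filter fun w => g w = e).card : ℝ) ≤ 2 := by exact_mod_cast this
    simp only []
    linarith
  · intro e he
    rw [hf]
    simp only []
    have : (univ.filter fun w => g w = e) = ∅ := by
      refine Finset.filter_false_of_mem ?_
      intro w _
      intro h
      exact he (h ▸ hgE w)
    rw [this]
    simp
  · intro v; rw [hvert v]
  · -- total weight
    have hcount := Finset.card_eq_sum_card_fiberwise
      (f := g) (s := (univ : Finset V)) (t := G.edgeFinset) (fun w _ => hgE w)
    have : ∑ e ∈ G.edgeFinset, f e
        = ((∑ e ∈ G.edgeFinset, (univ.filter fun w => g w = e).card : ℕ) : ℝ) / 2 := by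
      rw [hf]
      simp only []
      rw [← Finset.sum_div]
      push_cast
      ring
    rw [this, ← hcount, card_univ]

theorem hasFracPerfectMatching_of_q1_compl_lt {V : Type*} [Fintype V] [DecidableEq V]
    (G : SimpleGraph V) [DecidableRel G.Adj] (hconn : G.Connected)
    (hq : q1 Gᶜ < 2 * (G.minDegree : ℝ)) :
    HasFracPerfectMatching G := by
  classical
  have hall : ∀ A : Finset V, A.card ≤ (A.biUnion fun v => G.neighborFinset v).card := by
    intro A
    by_contra hA
    push_neg at hA
    set NA := A.biUnion fun v => G.neighborFinset v with hNA
    set J := A \ NA with hJdef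
    have hJA : J ⊆ A := sdiff_subset
    set NJ := J.biUnion fun v => G.neighborFinset v with hNJ
    have hNJsub : NJ ⊆ NA \ A := by
      intro xx hx
      rw [hNJ, mem_biUnion] at hx
      obtain ⟨j, hjJ, hxj⟩ := hx
      rw [SimpleGraph.mem_neighborFinset] at hxj
      have hjA : j ∈ A := hJA hjJ
      have hxNA : xx ∈ NA := by
        rw [hNA, mem_biUnion]
        exact ⟨j, hjA, (SimpleGraph.mem_neighborFinset _ _ _).2 hxj⟩
      refine mem_sdiff.2 ⟨hxNA, fun hxA => ?_⟩
      have hjNA : j ∈ NA := by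
        rw [hNA, mem_biUnion]
        exact ⟨xx, hxA, (SimpleGraph.mem_neighborFinset _ _ _).2 hxj.symm⟩
      exact (mem_sdiff.1 hjJ).2 hjNA
    have hc1 : (A ∩ NA).card + (A \ NA).card = A.card := card_inter_add_card_sdiff A NA
    have hc2 : (NA ∩ A).card + (NA \ A).card = NA.card := card_inter_add_card_sdiff NA A
    have hinter : (A ∩ NA).card = (NA ∩ A).card := by rw [inter_comm]
    have hNJcard : NJ.card ≤ (NA \ A).card := card_le_card hNJsub
    have hJlt : NJ.card < J.card := by
      have hAlt : NA.card < A.card := hA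
      rw [hJdef]
      omega
    have hJne : J.Nonempty := card_pos.mp (lt_of_le_of_lt (Nat.zero_le _) hJlt)
    obtain ⟨v, hv⟩ := hJne
    have hdeg : G.degree v ≤ NJ.card := by
      have hsub : G.neighborFinset v ⊆ NJ := by
        intro w hw
        rw [hNJ, mem_biUnion]
        exact ⟨v, hv, hw⟩
      simpa [← SimpleGraph.card_neighborFinset_eq_degree] using card_le_card hsub
    have hmd : G.minDegree ≤ G.degree v := G.minDegree_le_degree v
    have hclique : ∀ u ∈ J, ∀ w ∈ J, u ≠ w → Gᶜ.Adj u w := by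
      intro u hu w hw hne
      rw [SimpleGraph.compl_adj]
      refine ⟨hne, fun hadj => ?_⟩
      have : w ∈ NA := by
        rw [hNA, mem_biUnion]
        exact ⟨u, hJA hu, (SimpleGraph.mem_neighborFinset _ _ _).2 hadj⟩
      exact (mem_sdiff.1 hw).2 this
    have hb := clique_le_q1 Gᶜ J ⟨v, hv⟩ hclique
    have hmd' : (G.minDegree : ℝ) ≤ (J.card : ℝ) - 1 := by
      have h1 : G.minDegree ≤ NJ.card := hmd.trans hdeg
      have h2 : (NJ.card : ℝ) + 1 ≤ (J.card : ℝ) := by exact_mod_cast hJlt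
      have h3 : (G.minDegree : ℝ) ≤ (NJ.card : ℝ) := by exact_mod_cast h1
      linarith
    linarith
  obtain ⟨m, hminj, hm⟩ :=
    (Finset.all_card_le_biUnion_card_iff_exists_injective
      (fun v => G.neighborFinset v)).mp hall
  have hmadj : ∀ v, G.Adj v (m v) := fun v => (SimpleGraph.mem_neighborFinset _ _ _).1 (hm v)
  exact hasFracPerfectMatching_of_bij G m hminj hmadj
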